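/- For n ≥ 3, the non-orientable surface group G = ⟨x₁,…,x_n | x₁²x₂²⋯x_n² = 1⟩ is isomorphic to G' = ⟨x₁,…,x_n | x₁·(x₂⋯x_{n−1}x_n)·x₁⁻¹ = x_n⁻¹·x_{n−1}⋯x₂⟩, which is an HNN extension of the free group F(x₂,…,x_n) along cyclic subgroups generated by words of equal length n−1. -/

import Mathlib

/- Throughout, `n ≥ 3` is encoded as `n = m + 3`.
Generators: `x_j` corresponds to the index `j - 1 : Fin (m + 3)`. -/

/-- The relator `x₁²x₂²⋯x_n²`. -/
def nonorRelG (m : ℕ) : FreeGroup (Fin (m + 3)) :=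
  (List.ofFn (fun i : Fin (m + 3) => (FreeGroup.of i) ^ 2)).prod

/-- `x₂⋯x_{n-1}x_n` as a word in the free group on `x₁,…,x_n`. -/
def nonorW (m : ℕ) : FreeGroup (Fin (m + 3)) :=
  (List.ofFn (fun i : Fin (m + 2) =>
    FreeGroup.of (⟨i.val + 1, by have := i.isLt; omega⟩ : Fin (m + 3)))).prod

/-- `x_n⁻¹·x_{n-1}⋯x₂` as a word in the free group on `x₁,…,x_n`. -/
def nonorW' (m : ℕ) : FreeGroup (Fin (m + 3)) :=
  (FreeGroup.of (⟨m + 2, by omega⟩ : Fin (m + 3)))⁻¹ *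
  (List.ofFn (fun i : Fin (m + 1) =>
    FreeGroup.of (⟨m + 1 - i.val, by omega⟩ : Fin (m + 3)))).prod

/-- The relator `x₁·(x₂⋯x_n)·x₁⁻¹·(x_n⁻¹·x_{n-1}⋯x₂)⁻¹` of `G'`. -/
def nonorRelG' (m : ℕ) : FreeGroup (Fin (m + 3)) :=
  FreeGroup.of (⟨0, by omega⟩ : Fin (m + 3)) * nonorW m *
    (FreeGroup.of (⟨0, by omega⟩ : Fin (m + 3)))⁻¹ * (nonorW' m)⁻¹

/- In the free group `F(x₂,…,x_n)` on `n - 1 = m + 2` letters, the index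
`j : Fin (m + 2)` corresponds to `x_{j+2}`. -/

/-- `u = x₂⋯x_n ∈ F(x₂,…,x_n)`. -/
def nonorU (m : ℕ) : FreeGroup (Fin (m + 2)) :=
  (List.ofFn (fun i : Fin (m + 2) => FreeGroup.of i)).prod

/-- `v = x_n⁻¹·x_{n-1}⋯x₂ ∈ F(x₂,…,x_n)`. -/
def nonorV (m : ℕ) : FreeGroup (Fin (m + 2)) :=
  (FreeGroup.of (⟨m + 1, by omega⟩ : Fin (m + 2)))⁻¹ *
  (List.ofFn (fun i : Fin (m + 1) =>
    FreeGroup.of (⟨m - i.val, by omega⟩ : Fin (m + 2)))).prod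

open FreeGroup Subgroup

namespace NonorAux

/-- reduce is identity on locally-reduced words -/
theorem reduce_eq_self {α : Type*} [DecidableEq α] :
    ∀ (L : List (α × Bool)), L.Chain' (fun a b => a.1 ≠ b.1 ∨ a.2 = b.2) →
      FreeGroup.reduce L = L
  | [], _ => rfl
  | [x], _ => rfl
  | x :: y :: L, h => by
    rcases List.isChain_cons_cons.mp h with ⟨hxy, h'⟩
    have ih := reduce_eq_self (y :: L) h'
    rw [FreeGroup.reduce.cons, ih]
    dsimp only
    rw [if_neg]
    rintro ⟨h1, h2⟩
    rcases hxy with h3 | h3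
    · exact h3 h1
    · rw [h3] at h2; simp at h2

theorem chain'_of_forall {α : Type*} {R : α → α → Prop} (hR : ∀ a b, R a b) :
    ∀ (l : List α), l.Chain' R
  | [] => List.isChain_nil
  | [_] => List.isChain_singleton _
  | a :: b :: l => List.isChain_cons_cons.mpr ⟨hR a b, chain'_of_forall hR (b :: l)⟩

theorem chain'_of_snd_true {β : Type*} :
    ∀ (L : List (β × Bool)), (∀ p ∈ L, p.2 = true) →
      L.Chain' (fun a b => a.1 ≠ b.1 ∨ a.2 = b.2)
  | [], _ => List.isChain_nil
  | [_], _ => List.isChain_singleton _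
  | a :: b :: l, h => List.isChain_cons_cons.mpr
      ⟨Or.inr (by rw [h a (by simp), h b (by simp)]),
       chain'_of_snd_true (b :: l) (fun p hp => h p (List.mem_cons_of_mem _ hp))⟩

theorem mk_of_list {β : Type*} (l : List β) :
    (l.map FreeGroup.of).prod = FreeGroup.mk (l.map (fun a => (a, true))) := by
  induction l with
  | nil => simp [FreeGroup.one_eq_mk]
  | cons a l ih =>
      simp only [List.map_cons, List.prod_cons, ih]
      rw [show (FreeGroup.of a) = FreeGroup.mk [(a, true)] from rfl, FreeGroup.mul_mk]
      rfl

theorem norm_mk_of_chain {β : Type*} [DecidableEq β] (L : List (β × Bool))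
    (h : L.Chain' (fun a b => a.1 ≠ b.1 ∨ a.2 = b.2)) :
    (FreeGroup.mk L).norm = L.length := by
  rw [FreeGroup.norm, FreeGroup.toWord_mk, reduce_eq_self L h]

theorem norm_nonorU (m : ℕ) : (nonorU m).norm = m + 2 := by
  have : nonorU m = FreeGroup.mk ((List.finRange (m+2)).map (fun a => (a, true))) := by
    rw [nonorU, List.ofFn_eq_map, ← mk_of_list]
  rw [this, norm_mk_of_chain]
  · simp
  · rw [show List.Chain' _ _ = List.IsChain _ _ from rfl, List.isChain_map]
    exact chain'_of_forall (fun a b => Or.inr rfl) _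

theorem norm_nonorV (m : ℕ) : (nonorV m).norm = m + 2 := by
  have h1 : (List.ofFn (fun i : Fin (m + 1) =>
      FreeGroup.of (⟨m - i.val, by omega⟩ : Fin (m + 2)))).prod =
      FreeGroup.mk (((List.finRange (m+1)).map
        (fun i : Fin (m+1) => (⟨m - i.val, by omega⟩ : Fin (m + 2)))).map (fun a => (a, true))) := by
    rw [List.ofFn_eq_map, ← mk_of_list, List.map_map]
    rfl
  have h2 : (FreeGroup.of (⟨m + 1, by omega⟩ : Fin (m + 2)))⁻¹ =
      FreeGroup.mk [((⟨m + 1, by omega⟩ : Fin (m + 2)), false)] := by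
    rw [show FreeGroup.of (⟨m + 1, by omega⟩ : Fin (m + 2)) =
      FreeGroup.mk [((⟨m + 1, by omega⟩ : Fin (m + 2)), true)] from rfl, FreeGroup.inv_mk]
    rfl
  rw [nonorV, h1, h2, FreeGroup.mul_mk, norm_mk_of_chain]
  · simp
  · rw [List.singleton_append, List.finRange_succ]
    simp only [List.map_cons, List.map_map]
    refine List.isChain_cons_cons.mpr ⟨Or.inl ?_, ?_⟩
    · simp only [Function.comp]
      intro hc
      have := congrArg Fin.val hc
      simp at this
    · apply chain'_of_snd_true
      intro p hp
      rcases List.mem_cons.mp hp with h | h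
      · rw [h]
      · rcases List.mem_map.mp h with ⟨x, _, rfl⟩
        rfl

end NonorAux

namespace NonorAux2
variable (m : ℕ)

/-- generator `x j` (`j < m+3`), else `1`. -/
def x (j : ℕ) : FreeGroup (Fin (m + 3)) :=
  if h : j < m + 3 then FreeGroup.of ⟨j, h⟩ else 1

theorem x_eq {j : ℕ} (h : j < m + 3) : x m j = FreeGroup.of ⟨j, h⟩ := dif_pos h

theorem x_fin (i : Fin (m + 3)) : x m i.val = FreeGroup.of i := by
  rw [x_eq m i.isLt]

def P (k : ℕ) : FreeGroup (Fin (m + 3)) := ((List.range k).map (x m)).prod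

def Q (k : ℕ) : FreeGroup (Fin (m + 3)) := ((List.range k).map (fun j => (x m j)⁻¹)).prod

theorem P_succ (k : ℕ) : P m (k + 1) = P m k * x m k := by
  rw [P, P, List.range_succ, List.map_append, List.prod_append]; simp

theorem Q_succ (k : ℕ) : Q m (k + 1) = Q m k * (x m k)⁻¹ := by
  rw [Q, Q, List.range_succ, List.map_append, List.prod_append]; simp

def c (i : Fin (m + 3)) : FreeGroup (Fin (m + 3)) :=
  if i.val = m + 2 then Q m (m + 2) * x m (m + 2)
  else Q m i.val * x m i.val * (Q m i.val)⁻¹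

def d (i : Fin (m + 3)) : FreeGroup (Fin (m + 3)) :=
  if i.val = m + 2 then P m (m + 2) * x m (m + 2)
  else P m i.val * x m i.val * (P m i.val)⁻¹

noncomputable def alpha : FreeGroup (Fin (m + 3)) →* FreeGroup (Fin (m + 3)) :=
  FreeGroup.lift (c m)

noncomputable def beta : FreeGroup (Fin (m + 3)) →* FreeGroup (Fin (m + 3)) :=
  FreeGroup.lift (d m)

theorem alpha_x {j : ℕ} (h : j < m + 2) :
    alpha m (x m j) = Q m j * x m j * (Q m j)⁻¹ := by
  conv_lhs => rw [x_eq m (by omega : j < m + 3)]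
  rw [alpha, FreeGroup.lift_apply_of, c, if_neg (by simp; omega)]

theorem alpha_x_last : alpha m (x m (m + 2)) = Q m (m + 2) * x m (m + 2) := by
  conv_lhs => rw [x_eq m (by omega : m + 2 < m + 3)]
  rw [alpha, FreeGroup.lift_apply_of, c, if_pos rfl]

theorem beta_x {j : ℕ} (h : j < m + 2) :
    beta m (x m j) = P m j * x m j * (P m j)⁻¹ := by
  conv_lhs => rw [x_eq m (by omega : j < m + 3)]
  rw [beta, FreeGroup.lift_apply_of, d, if_neg (by simp; omega)]

theorem beta_x_last : beta m (x m (m + 2)) = P m (m + 2) * x m (m + 2) := by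
  conv_lhs => rw [x_eq m (by omega : m + 2 < m + 3)]
  rw [beta, FreeGroup.lift_apply_of, d, if_pos rfl]

theorem alphaP_betaQ : ∀ k, k ≤ m + 2 →
    alpha m (P m k) = (Q m k)⁻¹ ∧ beta m (Q m k) = (P m k)⁻¹
  | 0, _ => by constructor <;> simp [P, Q]
  | (k+1), h => by
    obtain ⟨ha, hb⟩ := alphaP_betaQ k (by omega)
    constructor
    · rw [P_succ, _root_.map_mul, ha, alpha_x m (by omega : k < m + 2), Q_succ]
      group
    · rw [Q_succ, _root_.map_mul, _root_.map_inv, hb, beta_x m (by omega : k < m + 2), P_succ]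
      group

theorem beta_alpha_of (i : Fin (m + 3)) : beta m (alpha m (FreeGroup.of i)) = FreeGroup.of i := by
  rw [← x_fin, alpha]
  by_cases h : i.val = m + 2
  · rw [h, ← alpha, alpha_x_last, _root_.map_mul, (alphaP_betaQ m (m+2) le_rfl).2, beta_x_last]
    group
  · have h2 : i.val < m + 2 := by have := i.isLt; omega
    rw [← alpha, alpha_x m h2, _root_.map_mul, _root_.map_mul, _root_.map_inv,
      (alphaP_betaQ m i.val (by omega)).2, beta_x m h2]
    group

theorem alpha_beta_of (i : Fin (m + 3)) : alpha m (beta m (FreeGroup.of i)) = FreeGroup.of i := by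
  rw [← x_fin, beta]
  by_cases h : i.val = m + 2
  · rw [h, ← beta, beta_x_last, _root_.map_mul, (alphaP_betaQ m (m+2) le_rfl).1, alpha_x_last]
    group
  · have h2 : i.val < m + 2 := by have := i.isLt; omega
    rw [← beta, beta_x m h2, _root_.map_mul, _root_.map_mul, _root_.map_inv,
      (alphaP_betaQ m i.val (by omega)).1, alpha_x m h2]
    group

noncomputable def e : FreeGroup (Fin (m + 3)) ≃* FreeGroup (Fin (m + 3)) :=
  MonoidHom.toMulEquiv (alpha m) (beta m)
    (FreeGroup.ext_hom _ _ (fun i => beta_alpha_of m i))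
    (FreeGroup.ext_hom _ _ (fun i => alpha_beta_of m i))

end NonorAux2

namespace NonorAux2
variable (m : ℕ)

theorem ofFn_prod {M : Type*} [Monoid M] (g : ℕ → M) (k : ℕ) :
    (List.ofFn (fun i : Fin k => g i.val)).prod = ((List.range k).map g).prod := by
  congr 1
  apply List.ext_getElem <;> simp

theorem revprod {G : Type*} [Group G] (g : ℕ → G) :
    ∀ k, (((List.range k).map (fun j => (g j)⁻¹)).prod)⁻¹ =
      ((List.range k).map (fun i => g (k - 1 - i))).prod
  | 0 => by simp
  | (k+1) => by
    have L : (((List.range (k+1)).map (fun j => (g j)⁻¹)).prod)⁻¹ =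
        g k * (((List.range k).map (fun j => (g j)⁻¹)).prod)⁻¹ := by
      rw [List.range_succ]; simp
    have R : ((List.range (k+1)).map (fun i => g (k + 1 - 1 - i))).prod =
        g k * ((List.range k).map (fun i => g (k - 1 - i))).prod := by
      rw [List.range_succ_eq_map]
      simp only [List.map_cons, List.prod_cons, List.map_map, Function.comp,
        Nat.add_sub_cancel, Nat.sub_zero]
      congr 1
      apply congrArg List.prod
      apply List.map_congr_left
      intro i _
      simp only [Function.comp_apply]
      congr 1
      omega
    rw [L, R, revprod g k]

theorem relG_eq : nonorRelG m = ((List.range (m + 3)).map (fun j => x m j ^ 2)).prod := by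
  rw [nonorRelG, ← ofFn_prod]
  congr 1
  exact congrArg List.ofFn (funext fun i => by rw [x_fin])

theorem Sq : ∀ k, k ≤ m + 2 →
    ((List.range k).map (fun j => alpha m (x m j) ^ 2)).prod = P m k * (Q m k)⁻¹
  | 0, _ => by simp [P, Q]
  | (k+1), h => by
    rw [List.range_succ, List.map_append, List.prod_append]
    simp only [List.map_cons, List.prod_cons, List.map_nil, List.prod_nil, mul_one]
    rw [Sq k (by omega), alpha_x m (by omega : k < m + 2), P_succ, Q_succ, pow_two]
    group

theorem alpha_relG : alpha m (nonorRelG m) =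
    P m (m + 2) * x m (m + 2) * Q m (m + 2) * x m (m + 2) := by
  rw [relG_eq, map_list_prod, List.map_map]
  have h1 : (alpha m) ∘ (fun j => x m j ^ 2) = fun j => alpha m (x m j) ^ 2 := by
    funext j; simp [Function.comp, map_pow]
  rw [h1, List.range_succ, List.map_append, List.prod_append]
  simp only [List.map_cons, List.prod_cons, List.map_nil, List.prod_nil, mul_one]
  rw [Sq m (m + 2) le_rfl, alpha_x_last, pow_two]
  group

theorem P_eq_cons (k : ℕ) :
    P m (k + 1) = x m 0 * ((List.range k).map (fun j => x m (j + 1))).prod := by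
  rw [P, List.range_succ_eq_map, List.map_cons, List.prod_cons, List.map_map]
  rfl

theorem relG'_eq : nonorRelG' m =
    P m (m + 2) * x m (m + 2) * Q m (m + 2) * x m (m + 2) := by
  have hx0 : FreeGroup.of (⟨0, by omega⟩ : Fin (m + 3)) = x m 0 := (x_eq m (by omega)).symm
  have hW : FreeGroup.of (⟨0, by omega⟩ : Fin (m + 3)) * nonorW m =
      P m (m + 2) * x m (m + 2) := by
    rw [nonorW, show (List.ofFn (fun i : Fin (m + 2) =>
        FreeGroup.of (⟨i.val + 1, by have := i.isLt; omega⟩ : Fin (m + 3)))) =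
      (List.ofFn (fun i : Fin (m + 2) => x m (i.val + 1))) from
        congrArg List.ofFn (funext fun i =>
          (x_eq m (by have := i.isLt; omega : i.val + 1 < m + 3)).symm)]
    rw [ofFn_prod (fun j => x m (j + 1)) (m + 2), hx0, ← P_eq_cons, P_succ]
  have hrev : (List.ofFn (fun i : Fin (m + 1) =>
      FreeGroup.of (⟨m + 1 - i.val, by omega⟩ : Fin (m + 3)))).prod * x m 0 =
      (Q m (m + 2))⁻¹ := by
    rw [show (List.ofFn (fun i : Fin (m + 1) =>
        FreeGroup.of (⟨m + 1 - i.val, by omega⟩ : Fin (m + 3)))) =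
      (List.ofFn (fun i : Fin (m + 1) => x m (m + 1 - i.val))) from
        congrArg List.ofFn (funext fun i =>
          (x_eq m (by omega : m + 1 - i.val < m + 3)).symm)]
    rw [ofFn_prod (fun j => x m (m + 1 - j)) (m + 1), Q, revprod (x m) (m + 2)]
    rw [List.range_succ (n := m + 1), List.map_append, List.prod_append]
    simp only [List.map_cons, List.prod_cons, List.map_nil, List.prod_nil, mul_one]
    have e1 : ((List.range (m+1)).map (fun i => x m (m + 2 - 1 - i))).prod =
        ((List.range (m+1)).map (fun j => x m (m + 1 - j))).prod := by
      apply congrArg List.prod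
      apply List.map_congr_left
      intro i hi
      have := List.mem_range.mp hi
      first
      | rfl
      | (congr 1; omega)
    have e2 : m + 2 - 1 - (m + 1) = 0 := by omega
    rw [e1]
    rw [show x m (m + 2 - 1 - (m + 1)) = x m 0 from by rw [e2]]
  have hW' : (nonorW' m)⁻¹ = x m 0 * Q m (m + 2) * x m (m + 2) := by
    rw [nonorW']
    rw [show FreeGroup.of (⟨m + 2, by omega⟩ : Fin (m + 3)) = x m (m + 2) from
      (x_eq m (by omega)).symm]
    rw [show (List.ofFn (fun i : Fin (m + 1) =>
        FreeGroup.of (⟨m + 1 - i.val, by omega⟩ : Fin (m + 3)))).prod =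
      (Q m (m + 2))⁻¹ * (x m 0)⁻¹ from by rw [← hrev]; group]
    group
  rw [nonorRelG', hW', show FreeGroup.of (⟨0, by omega⟩ : Fin (m + 3)) * nonorW m *
      (FreeGroup.of (⟨0, by omega⟩ : Fin (m + 3)))⁻¹ =
    P m (m + 2) * x m (m + 2) * (x m 0)⁻¹ from by rw [← hW, hx0]]
  group

theorem alpha_rel : alpha m (nonorRelG m) = nonorRelG' m := by
  rw [alpha_relG, relG'_eq]

end NonorAux2

namespace NonorAux3

open Subgroup

/-- weight-one homomorphism -/
noncomputable def psi1 (m : ℕ) : FreeGroup (Fin (m + 2)) →* Multiplicative ℤ :=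
  FreeGroup.lift (fun _ => Multiplicative.ofAdd 1)

noncomputable def psi2 (m : ℕ) : FreeGroup (Fin (m + 2)) →* Multiplicative ℤ :=
  FreeGroup.lift (fun j => if j.val = m + 1 then Multiplicative.ofAdd (-(m + 1) : ℤ)
    else Multiplicative.ofAdd 1)

theorem psi1_u (m : ℕ) : psi1 m (nonorU m) = Multiplicative.ofAdd (m + 2 : ℤ) := by
  rw [nonorU, map_list_prod, List.map_ofFn]
  have : (psi1 m) ∘ (fun i : Fin (m + 2) => FreeGroup.of i) =
      fun _ : Fin (m + 2) => Multiplicative.ofAdd (1 : ℤ) := by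
    funext i; simp [psi1, Function.comp]
  rw [this, List.ofFn_const, List.prod_replicate]
  apply Multiplicative.toAdd.injective
  simp
  all_goals (try push_cast)
  all_goals (try ring)

theorem psi2_v (m : ℕ) : psi2 m (nonorV m) = Multiplicative.ofAdd (2 * m + 2 : ℤ) := by
  rw [nonorV, _root_.map_mul, _root_.map_inv, map_list_prod, List.map_ofFn]
  have h1 : psi2 m (FreeGroup.of (⟨m + 1, by omega⟩ : Fin (m + 2))) =
      Multiplicative.ofAdd (-(m + 1) : ℤ) := by
    rw [psi2, FreeGroup.lift_apply_of, if_pos rfl]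
  have h2 : (psi2 m) ∘ (fun i : Fin (m + 1) =>
      FreeGroup.of (⟨m - i.val, by omega⟩ : Fin (m + 2))) =
      fun _ : Fin (m + 1) => Multiplicative.ofAdd (1 : ℤ) := by
    funext i
    simp only [Function.comp_apply, psi2, FreeGroup.lift_apply_of]
    rw [if_neg (by omega)]
  rw [h1, h2, List.ofFn_const, List.prod_replicate]
  apply Multiplicative.toAdd.injective
  simp
  all_goals (try push_cast)
  all_goals (try ring)

theorem inj_zpow_of_psi {m : ℕ} (w : FreeGroup (Fin (m + 2)))
    (ψ : FreeGroup (Fin (m + 2)) →* Multiplicative ℤ) (c : ℤ) (hc : c ≠ 0)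
    (hw : ψ w = Multiplicative.ofAdd c) :
    Function.Injective fun n : ℤ => w ^ n := by
  intro j k h
  have h2 := congrArg ψ h
  simp only [map_zpow, hw] at h2
  have h3 := congrArg Multiplicative.toAdd h2
  simp only [toAdd_zpow, toAdd_ofAdd] at h3
  have : j * c = k * c := by
    simpa [smul_eq_mul, mul_comm] using h3
  exact mul_right_cancel₀ hc this

theorem inj_u (m : ℕ) : Function.Injective fun n : ℤ => nonorU m ^ n :=
  inj_zpow_of_psi _ (psi1 m) (m + 2 : ℤ) (by positivity) (psi1_u m)

theorem inj_v (m : ℕ) : Function.Injective fun n : ℤ => nonorV m ^ n :=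
  inj_zpow_of_psi _ (psi2 m) (2 * m + 2 : ℤ) (by positivity) (psi2_v m)

section zpowEquiv

variable {G : Type*} [Group G] {u v : G}

noncomputable def lg (u : G) (a : Subgroup.zpowers u) : ℤ :=
  Classical.choose (Subgroup.mem_zpowers_iff.mp a.2)

theorem lg_spec (u : G) (a : Subgroup.zpowers u) : u ^ lg u a = (a : G) :=
  Classical.choose_spec (Subgroup.mem_zpowers_iff.mp a.2)

theorem lg_unique (hu : Function.Injective fun n : ℤ => u ^ n) {a : Subgroup.zpowers u} {k : ℤ}
    (h : u ^ k = (a : G)) : lg u a = k :=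
  hu ((lg_spec u a).trans h.symm)

noncomputable def zpowEquiv (hu : Function.Injective fun n : ℤ => u ^ n)
    (hv : Function.Injective fun n : ℤ => v ^ n) :
    Subgroup.zpowers u ≃* Subgroup.zpowers v where
  toFun a := ⟨v ^ lg u a, zpow_mem_zpowers v _⟩
  invFun b := ⟨u ^ lg v b, zpow_mem_zpowers u _⟩
  left_inv a := by
    have h1 : lg v (⟨v ^ lg u a, zpow_mem_zpowers v _⟩ : Subgroup.zpowers v) = lg u a :=
      lg_unique hv rfl
    ext
    simp only [h1]
    exact lg_spec u a
  right_inv b := by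
    have h1 : lg u (⟨u ^ lg v b, zpow_mem_zpowers u _⟩ : Subgroup.zpowers u) = lg v b :=
      lg_unique hu rfl
    ext
    simp only [h1]
    exact lg_spec v b
  map_mul' a b := by
    ext
    simp only [Subgroup.coe_mul, ← zpow_add]
    congr 1
    apply hu
    show u ^ lg u (a * b) = u ^ (lg u a + lg u b)
    rw [lg_spec, zpow_add, lg_spec, lg_spec]
    rfl

theorem zpowEquiv_self (hu : Function.Injective fun n : ℤ => u ^ n)
    (hv : Function.Injective fun n : ℤ => v ^ n) :
    zpowEquiv hu hv ⟨u, Subgroup.mem_zpowers u⟩ = ⟨v, Subgroup.mem_zpowers v⟩ := by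
  have : lg u (⟨u, Subgroup.mem_zpowers u⟩ : Subgroup.zpowers u) = 1 :=
    lg_unique hu (zpow_one u)
  ext
  show v ^ lg u _ = v
  rw [this, zpow_one]

theorem zpowEquiv_zpow (hu : Function.Injective fun n : ℤ => u ^ n)
    (hv : Function.Injective fun n : ℤ => v ^ n) (k : ℤ) :
    ((zpowEquiv hu hv ⟨u ^ k, zpow_mem_zpowers u k⟩ : Subgroup.zpowers v) : G) = v ^ k := by
  have ha : (⟨u ^ k, zpow_mem_zpowers u k⟩ : Subgroup.zpowers u) =
      (⟨u, Subgroup.mem_zpowers u⟩ : Subgroup.zpowers u) ^ k := by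
    ext; simp
  rw [ha, map_zpow, zpowEquiv_self hu hv]
  simp

end zpowEquiv
end NonorAux3

namespace NonorFinal

open Subgroup NonorAux2 NonorAux3

noncomputable def isoGG' (m : ℕ) :
    PresentedGroup ({nonorRelG m} : Set (FreeGroup (Fin (m + 3)))) ≃*
    PresentedGroup ({nonorRelG' m} : Set (FreeGroup (Fin (m + 3)))) :=
  QuotientGroup.congr _ _ (NonorAux2.e m) (by
    have h1 := Subgroup.map_normalClosure {nonorRelG m}
      ((NonorAux2.e m : FreeGroup (Fin (m+3)) ≃* FreeGroup (Fin (m+3))) :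
        FreeGroup (Fin (m+3)) →* FreeGroup (Fin (m+3))) (NonorAux2.e m).surjective
    rw [h1, Set.image_singleton]
    exact congrArg (fun z => Subgroup.normalClosure {z}) (NonorAux2.alpha_rel m))

noncomputable def phi (m : ℕ) :
    Subgroup.zpowers (nonorU m) ≃* Subgroup.zpowers (nonorV m) :=
  zpowEquiv (inj_u m) (inj_v m)

theorem phi_self (m : ℕ) :
    phi m ⟨nonorU m, Subgroup.mem_zpowers _⟩ = ⟨nonorV m, Subgroup.mem_zpowers _⟩ :=
  zpowEquiv_self _ _

abbrev HNN (m : ℕ) := HNNExtension (FreeGroup (Fin (m + 2)))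
  (Subgroup.zpowers (nonorU m)) (Subgroup.zpowers (nonorV m)) (phi m)

noncomputable def Fgen (m : ℕ) : Fin (m + 3) → HNN m := fun j =>
  if h : j.val = 0 then HNNExtension.t
  else HNNExtension.of (FreeGroup.of (⟨j.val - 1, by have := j.isLt; omega⟩ : Fin (m + 2)))

theorem ofU (m : ℕ) : (HNNExtension.of (nonorU m) : HNN m) =
    (List.ofFn (fun i : Fin (m + 2) =>
      (HNNExtension.of (FreeGroup.of i) : HNN m))).prod := by
  have h : (HNNExtension.of (nonorU m) : HNN m) =
      ((List.ofFn (fun i : Fin (m + 2) => FreeGroup.of i)).map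
        (HNNExtension.of (G := FreeGroup (Fin (m + 2))))).prod :=
    map_list_prod (HNNExtension.of) (List.ofFn fun i : Fin (m + 2) => FreeGroup.of i)
  rw [h, List.map_ofFn]
  rfl

theorem ofV (m : ℕ) : (HNNExtension.of (nonorV m) : HNN m) =
    (HNNExtension.of (FreeGroup.of (⟨m + 1, by omega⟩ : Fin (m + 2))) : HNN m)⁻¹ *
    (List.ofFn (fun i : Fin (m + 1) =>
      (HNNExtension.of (FreeGroup.of (⟨m - i.val, by omega⟩ : Fin (m + 2))) : HNN m))).prod := by
  have h : (HNNExtension.of (nonorV m) : HNN m) =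
      HNNExtension.of ((FreeGroup.of (⟨m + 1, by omega⟩ : Fin (m + 2)))⁻¹ *
        (List.ofFn (fun i : Fin (m + 1) =>
          FreeGroup.of (⟨m - i.val, by omega⟩ : Fin (m + 2)))).prod) := rfl
  rw [h, _root_.map_mul, _root_.map_inv, map_list_prod, List.map_ofFn]
  rfl

theorem liftF_W (m : ℕ) :
    FreeGroup.lift (Fgen m) (nonorW m) = HNNExtension.of (nonorU m) := by
  rw [nonorW, map_list_prod, List.map_ofFn, ofU]
  apply congrArg List.prod
  apply congrArg List.ofFn
  funext i
  show FreeGroup.lift (Fgen m) (FreeGroup.of _) = _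
  rw [FreeGroup.lift_apply_of, Fgen]
  rw [dif_neg (by simp)]
  apply congrArg
  apply congrArg
  ext
  show i.val + 1 - 1 = i.val
  omega

theorem liftF_W' (m : ℕ) :
    FreeGroup.lift (Fgen m) (nonorW' m) = HNNExtension.of (nonorV m) := by
  rw [nonorW', _root_.map_mul, _root_.map_inv, map_list_prod, List.map_ofFn, ofV]
  have hA : FreeGroup.lift (Fgen m) (FreeGroup.of (⟨m + 2, by omega⟩ : Fin (m + 3))) =
      (HNNExtension.of (FreeGroup.of (⟨m + 1, by omega⟩ : Fin (m + 2))) : HNN m) := by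
    rw [FreeGroup.lift_apply_of, Fgen]
    rw [dif_neg (by simp)]
    apply congrArg
    apply congrArg
    ext
    show m + 2 - 1 = m + 1
    omega
  have hB : (List.ofFn ((FreeGroup.lift (Fgen m)) ∘ fun i : Fin (m + 1) =>
      FreeGroup.of (⟨m + 1 - i.val, by omega⟩ : Fin (m + 3)))).prod =
      (List.ofFn (fun i : Fin (m + 1) =>
        (HNNExtension.of (FreeGroup.of (⟨m - i.val, by omega⟩ : Fin (m + 2))) : HNN m))).prod := by
    apply congrArg List.prod
    apply congrArg List.ofFn
    funext i
    show FreeGroup.lift (Fgen m) (FreeGroup.of _) = _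
    rw [FreeGroup.lift_apply_of, Fgen]
    rw [dif_neg (by have := i.isLt; simp; omega)]
    apply congrArg
    apply congrArg
    ext
    show m + 1 - i.val - 1 = m - i.val
    omega
  rw [hA, hB]

theorem liftF_rel (m : ℕ) : FreeGroup.lift (Fgen m) (nonorRelG' m) = 1 := by
  rw [nonorRelG']
  simp only [_root_.map_mul, _root_.map_inv]
  rw [liftF_W, liftF_W']
  have h0 : FreeGroup.lift (Fgen m) (FreeGroup.of (⟨0, by omega⟩ : Fin (m + 3))) =
      HNNExtension.t := by
    rw [FreeGroup.lift_apply_of, Fgen]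
    rw [dif_pos rfl]
  rw [h0]
  have key : HNNExtension.t * (HNNExtension.of (nonorU m) : HNN m) =
      HNNExtension.of (nonorV m) * HNNExtension.t := by
    have k1 := HNNExtension.t_mul_of (φ := phi m) ⟨nonorU m, Subgroup.mem_zpowers _⟩
    rw [phi_self m] at k1
    exact k1
  rw [key]
  group

noncomputable def bigPhi (m : ℕ) :
    PresentedGroup ({nonorRelG' m} : Set (FreeGroup (Fin (m + 3)))) →* HNN m :=
  PresentedGroup.toGroup (f := Fgen m) (by
    intro r hr
    rw [Set.mem_singleton_iff.mp hr]
    exact liftF_rel m)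

noncomputable def f0 (m : ℕ) :
    FreeGroup (Fin (m + 2)) →* PresentedGroup ({nonorRelG' m} : Set (FreeGroup (Fin (m + 3)))) :=
  FreeGroup.lift (fun j => PresentedGroup.of ⟨j.val + 1, by have := j.isLt; omega⟩)

theorem f0_U (m : ℕ) :
    f0 m (nonorU m) = PresentedGroup.mk {nonorRelG' m} (nonorW m) := by
  have h : f0 m (nonorU m) =
      ((List.ofFn (fun i : Fin (m + 2) => FreeGroup.of i)).map (f0 m)).prod :=
    map_list_prod (f0 m) _
  rw [h, List.map_ofFn, nonorW, map_list_prod, List.map_ofFn]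
  apply congrArg List.prod
  apply congrArg List.ofFn
  funext i
  show f0 m (FreeGroup.of i) = PresentedGroup.mk _ (FreeGroup.of _)
  rw [f0, FreeGroup.lift_apply_of]
  rfl

theorem f0_V (m : ℕ) :
    f0 m (nonorV m) = PresentedGroup.mk {nonorRelG' m} (nonorW' m) := by
  have h : f0 m (nonorV m) =
      (f0 m (FreeGroup.of (⟨m + 1, by omega⟩ : Fin (m + 2))))⁻¹ *
      ((List.ofFn (fun i : Fin (m + 1) =>
        FreeGroup.of (⟨m - i.val, by omega⟩ : Fin (m + 2)))).map (f0 m)).prod := by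
    have h2 : f0 m (nonorV m) = f0 m ((FreeGroup.of (⟨m + 1, by omega⟩ : Fin (m + 2)))⁻¹ *
        (List.ofFn (fun i : Fin (m + 1) =>
          FreeGroup.of (⟨m - i.val, by omega⟩ : Fin (m + 2)))).prod) := rfl
    rw [h2, _root_.map_mul, _root_.map_inv, map_list_prod]
  rw [h, List.map_ofFn, nonorW', _root_.map_mul, _root_.map_inv, map_list_prod, List.map_ofFn]
  have hA : f0 m (FreeGroup.of (⟨m + 1, by omega⟩ : Fin (m + 2))) =
      PresentedGroup.mk {nonorRelG' m} (FreeGroup.of (⟨m + 2, by omega⟩ : Fin (m + 3))) := by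
    rw [f0, FreeGroup.lift_apply_of]
    rfl
  have hB : (List.ofFn ((f0 m) ∘ fun i : Fin (m + 1) =>
      FreeGroup.of (⟨m - i.val, by omega⟩ : Fin (m + 2)))).prod =
      (List.ofFn ((PresentedGroup.mk {nonorRelG' m}) ∘ fun i : Fin (m + 1) =>
        FreeGroup.of (⟨m + 1 - i.val, by omega⟩ : Fin (m + 3)))).prod := by
    apply congrArg List.prod
    apply congrArg List.ofFn
    funext i
    show f0 m (FreeGroup.of _) = PresentedGroup.mk _ (FreeGroup.of _)
    rw [f0, FreeGroup.lift_apply_of]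
    show PresentedGroup.of _ = PresentedGroup.of _
    apply congrArg
    ext
    show m - i.val + 1 = m + 1 - i.val
    have := i.isLt
    omega
  rw [hA, hB]

theorem rel_one (m : ℕ) : PresentedGroup.mk {nonorRelG' m} (nonorRelG' m) = 1 :=
  (QuotientGroup.eq_one_iff _).mpr (Subgroup.subset_normalClosure (Set.mem_singleton _))

theorem base_rel (m : ℕ) :
    PresentedGroup.of (rels := {nonorRelG' m}) ⟨0, by omega⟩ * f0 m (nonorU m) =
      f0 m (nonorV m) * PresentedGroup.of ⟨0, by omega⟩ := by
  have h : PresentedGroup.mk {nonorRelG' m} (FreeGroup.of (⟨0, by omega⟩ : Fin (m + 3)) *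
      nonorW m * (FreeGroup.of (⟨0, by omega⟩ : Fin (m + 3)))⁻¹ * (nonorW' m)⁻¹) = 1 :=
    rel_one m
  rw [_root_.map_mul, _root_.map_mul, _root_.map_mul, _root_.map_inv, _root_.map_inv] at h
  rw [f0_U, f0_V]
  have h2 : PresentedGroup.mk {nonorRelG' m} (FreeGroup.of (⟨0, by omega⟩ : Fin (m + 3))) *
      PresentedGroup.mk {nonorRelG' m} (nonorW m) *
      (PresentedGroup.mk {nonorRelG' m} (FreeGroup.of (⟨0, by omega⟩ : Fin (m + 3))))⁻¹ =
      PresentedGroup.mk {nonorRelG' m} (nonorW' m) := by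
    rwa [mul_inv_eq_one] at h
  show PresentedGroup.mk {nonorRelG' m} (FreeGroup.of (⟨0, by omega⟩ : Fin (m + 3))) *
      PresentedGroup.mk {nonorRelG' m} (nonorW m) =
      PresentedGroup.mk {nonorRelG' m} (nonorW' m) *
      PresentedGroup.mk {nonorRelG' m} (FreeGroup.of (⟨0, by omega⟩ : Fin (m + 3)))
  rw [← h2]
  group

theorem hx (m : ℕ) : ∀ a : Subgroup.zpowers (nonorU m),
    PresentedGroup.of (rels := {nonorRelG' m}) ⟨0, by omega⟩ * f0 m ↑a =
      f0 m ↑(phi m a) * PresentedGroup.of ⟨0, by omega⟩ := by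
  rintro ⟨g, hg⟩
  obtain ⟨k, rfl⟩ := Subgroup.mem_zpowers_iff.mp hg
  have hcoe : ((⟨nonorU m ^ k, hg⟩ : Subgroup.zpowers (nonorU m)) : FreeGroup (Fin (m + 2))) =
      nonorU m ^ k := rfl
  have hphi : ((phi m ⟨nonorU m ^ k, hg⟩ : Subgroup.zpowers (nonorV m)) :
      FreeGroup (Fin (m + 2))) = nonorV m ^ k := by
    have : (⟨nonorU m ^ k, hg⟩ : Subgroup.zpowers (nonorU m)) =
        ⟨nonorU m ^ k, zpow_mem_zpowers _ k⟩ := rfl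
    rw [this]
    exact zpowEquiv_zpow (inj_u m) (inj_v m) k
  rw [hcoe, hphi, map_zpow, map_zpow]
  have hb := base_rel m
  have hv : f0 m (nonorV m) =
      PresentedGroup.of (rels := {nonorRelG' m}) ⟨0, by omega⟩ * f0 m (nonorU m) *
        (PresentedGroup.of (rels := {nonorRelG' m}) ⟨0, by omega⟩)⁻¹ := by
    rw [hb]
    group
  rw [hv, conj_zpow]
  group

noncomputable def bigPsi (m : ℕ) :
    HNN m →* PresentedGroup ({nonorRelG' m} : Set (FreeGroup (Fin (m + 3)))) :=
  HNNExtension.lift (f0 m) (PresentedGroup.of ⟨0, by omega⟩) (hx m)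

theorem psi_phi (m : ℕ) : (bigPsi m).comp (bigPhi m) = MonoidHom.id _ := by
  apply PresentedGroup.ext
  intro j
  show bigPsi m (bigPhi m (PresentedGroup.of j)) = PresentedGroup.of j
  have h1 : bigPhi m (PresentedGroup.of j) = Fgen m j := PresentedGroup.toGroup.of _
  rw [h1, Fgen]
  by_cases h : j.val = 0
  · rw [dif_pos h]
    have h2 : bigPsi m HNNExtension.t = PresentedGroup.of ⟨0, by omega⟩ :=
      HNNExtension.lift_t _ _ _
    rw [h2]
    apply congrArg
    ext
    show (0 : ℕ) = j.val
    omega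
  · rw [dif_neg h]
    have h2 : bigPsi m (HNNExtension.of (FreeGroup.of
        (⟨j.val - 1, by have := j.isLt; omega⟩ : Fin (m + 2)))) =
        f0 m (FreeGroup.of (⟨j.val - 1, by have := j.isLt; omega⟩ : Fin (m + 2))) :=
      HNNExtension.lift_of _ _ _ _
    rw [h2, f0, FreeGroup.lift_apply_of]
    apply congrArg
    ext
    show j.val - 1 + 1 = j.val
    omega

theorem phi_psi (m : ℕ) : (bigPhi m).comp (bigPsi m) = MonoidHom.id _ := by
  apply HNNExtension.hom_ext
  · apply FreeGroup.ext_hom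
    intro a
    show bigPhi m (bigPsi m (HNNExtension.of (FreeGroup.of a))) = HNNExtension.of (FreeGroup.of a)
    have h1 : bigPsi m (HNNExtension.of (FreeGroup.of a)) = f0 m (FreeGroup.of a) :=
      HNNExtension.lift_of _ _ _ _
    rw [h1, f0, FreeGroup.lift_apply_of]
    have h2 : bigPhi m (PresentedGroup.of ⟨a.val + 1, by have := a.isLt; omega⟩) =
        Fgen m ⟨a.val + 1, by have := a.isLt; omega⟩ := PresentedGroup.toGroup.of _
    rw [h2, Fgen]
    rw [dif_neg (by simp)]
    apply congrArg
    apply congrArg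
    ext
    show a.val + 1 - 1 = a.val
    omega
  · show bigPhi m (bigPsi m HNNExtension.t) = HNNExtension.t
    have h1 : bigPsi m HNNExtension.t = PresentedGroup.of ⟨0, by omega⟩ :=
      HNNExtension.lift_t _ _ _
    rw [h1]
    have h2 : bigPhi m (PresentedGroup.of (⟨0, by omega⟩ : Fin (m + 3))) =
        Fgen m ⟨0, by omega⟩ := PresentedGroup.toGroup.of _
    rw [h2, Fgen]
    rw [dif_pos rfl]

noncomputable def isoHNN (m : ℕ) :
    PresentedGroup ({nonorRelG' m} : Set (FreeGroup (Fin (m + 3)))) ≃* HNN m :=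
  MonoidHom.toMulEquiv (bigPhi m) (bigPsi m) (psi_phi m) (phi_psi m)

end NonorFinal

theorem nonorientable_surface_group_is_HNN (m : ℕ) :
    Nonempty (PresentedGroup ({nonorRelG m} : Set (FreeGroup (Fin (m + 3)))) ≃*
      PresentedGroup ({nonorRelG' m} : Set (FreeGroup (Fin (m + 3))))) ∧
    (nonorU m).norm = m + 2 ∧ (nonorV m).norm = m + 2 ∧
    ∃ φ : Subgroup.zpowers (nonorU m) ≃* Subgroup.zpowers (nonorV m),
      φ ⟨nonorU m, Subgroup.mem_zpowers _⟩ = ⟨nonorV m, Subgroup.mem_zpowers _⟩ ∧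
      Nonempty (PresentedGroup ({nonorRelG' m} : Set (FreeGroup (Fin (m + 3)))) ≃*
        HNNExtension (FreeGroup (Fin (m + 2)))
          (Subgroup.zpowers (nonorU m)) (Subgroup.zpowers (nonorV m)) φ) :=
  ⟨⟨NonorFinal.isoGG' m⟩, NonorAux.norm_nonorU m, NonorAux.norm_nonorV m,
    NonorFinal.phi m, NonorFinal.phi_self m, ⟨NonorFinal.isoHNN m⟩⟩
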